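/- Fix p > 2 and define f(x) = |x|·p^{1/p}·|ln|x||^{1/p} for 0 < |x| ≤ e^{-2} and f(0) = 0. Define N(s) = -s·ln(s) for 0 < s ≤ e^{-2} and N(0)=0. Then for all x, y ∈ [0, e^{-2}], |f(x) - f(y)|^p ≤ N(|x - y|^p). -/
import Mathlib


open Real Set

private lemma Nmono_aux {a b : ℝ} (ha : 0 < a) (hab : a ≤ b) (hb : b ≤ Real.exp (-1)) :
    -a * Real.log a ≤ -b * Real.log b := by
  have hb0 : 0 < b := lt_of_lt_of_le ha hab
  have h1 : Real.log b - Real.log a ≤ b / a - 1 := by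
    have h := Real.log_le_sub_one_of_pos (show 0 < b / a by positivity)
    rwa [Real.log_div hb0.ne' ha.ne'] at h
  have h2 : Real.log b ≤ -1 := by
    calc Real.log b ≤ Real.log (Real.exp (-1)) := Real.log_le_log hb0 hb
    _ = -1 := Real.log_exp _
  have h3 : a * (b / a - 1) = b - a := by field_simp
  nlinarith [mul_le_mul_of_nonneg_left h1 ha.le,
    mul_le_mul_of_nonneg_left h2 (sub_nonneg.2 hab)]

theorem modulus_estimate_for_f
    (p : ℝ) (hp : 2 < p) :
    let f : ℝ → ℝ := fun x =>
      if x = 0 then 0 else (abs x) * p ^ (1/p) * (abs (Real.log (abs x))) ^ (1/p)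
    let N : ℝ → ℝ := fun s => if s ≤ 0 then 0 else -s * Real.log s
    ∀ x ∈ Icc (0:ℝ) (Real.exp (-2)), ∀ y ∈ Icc (0:ℝ) (Real.exp (-2)),
      |f x - f y| ^ p ≤ N (|x - y| ^ p) := by
  intro f N
  have hp0 : (0:ℝ) < p := by linarith
  have hp0' : p ≠ 0 := ne_of_gt hp0
  have hip : (0:ℝ) ≤ 1 / p := by positivity
  have hc : (0:ℝ) < p ^ (1/p) := Real.rpow_pos_of_pos hp0 _
  -- log bound
  have hlog : ∀ t : ℝ, 0 < t → t ≤ Real.exp (-2) → Real.log t ≤ -2 := by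
    intro t ht hte
    calc Real.log t ≤ Real.log (Real.exp (-2)) := Real.log_le_log ht hte
    _ = -2 := Real.log_exp _
  -- explicit formula for f on (0, e^{-2}]
  have hf : ∀ t : ℝ, 0 < t → t ≤ Real.exp (-2) →
      f t = t * p ^ (1/p) * (-Real.log t) ^ (1/p) := by
    intro t ht hte
    have h1 : Real.log t ≤ -2 := hlog t ht hte
    simp only [f, if_neg (ne_of_gt ht), abs_of_pos ht,
      abs_of_neg (show Real.log t < 0 by linarith)]
  have hfnn : ∀ t : ℝ, 0 < t → t ≤ Real.exp (-2) → 0 ≤ f t := by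
    intro t ht hte
    rw [hf t ht hte]
    have : (0:ℝ) ≤ -Real.log t := by have := hlog t ht hte; linarith
    positivity
  -- (f d)^p = N (d^p) for 0 < d ≤ e^{-2}
  have hcomp : ∀ d : ℝ, 0 < d → d ≤ Real.exp (-2) → (f d) ^ p = N (d ^ p) := by
    intro d hd hde
    have hld : Real.log d ≤ -2 := hlog d hd hde
    have hldn : (0:ℝ) ≤ -Real.log d := by linarith
    have hdp : (0:ℝ) < d ^ p := Real.rpow_pos_of_pos hd p
    have hN : N (d ^ p) = -(d ^ p) * Real.log (d ^ p) := by
      simp only [N, if_neg (not_le.2 hdp)]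
    rw [hf d hd hde, hN, Real.log_rpow hd]
    rw [Real.mul_rpow (by positivity) (Real.rpow_nonneg hldn _),
      Real.mul_rpow hd.le (Real.rpow_nonneg hp0.le _)]
    rw [one_div, Real.rpow_inv_rpow hp0.le hp0', Real.rpow_inv_rpow hldn hp0']
    ring
  -- monotonicity of f on (0, e^{-2}]
  have hmono : ∀ a b : ℝ, 0 < b → b ≤ a → a ≤ Real.exp (-2) → f b ≤ f a := by
    intro a b hb hba hae
    have ha : 0 < a := lt_of_lt_of_le hb hba
    have hbe : b ≤ Real.exp (-2) := hba.trans hae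
    have hla : (0:ℝ) ≤ -Real.log a := by have := hlog a ha hae; linarith
    have hlb : (0:ℝ) ≤ -Real.log b := by have := hlog b hb hbe; linarith
    rw [hf a ha hae, hf b hb hbe]
    have key : b * (-Real.log b) ^ (1/p) ≤ a * (-Real.log a) ^ (1/p) := by
      rw [← Real.rpow_le_rpow_iff (by positivity) (by positivity) hp0]
      rw [Real.mul_rpow hb.le (Real.rpow_nonneg hlb _), Real.mul_rpow ha.le (Real.rpow_nonneg hla _)]
      rw [one_div, Real.rpow_inv_rpow hlb hp0', Real.rpow_inv_rpow hla hp0']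
      have hap : a ^ p ≤ Real.exp (-1) := by
        calc a ^ p ≤ (Real.exp (-2)) ^ p :=
              Real.rpow_le_rpow ha.le hae hp0.le
        _ = Real.exp (-2 * p) := (Real.exp_mul _ _).symm
        _ ≤ Real.exp (-1) := Real.exp_le_exp.2 (by nlinarith)
      have hbpap : b ^ p ≤ a ^ p := Real.rpow_le_rpow hb.le hba hp0.le
      have hbp : (0:ℝ) < b ^ p := Real.rpow_pos_of_pos hb p
      have := Nmono_aux hbp hbpap hap
      rw [Real.log_rpow hb, Real.log_rpow ha] at this
      nlinarith
    calc b * p ^ (1/p) * (-Real.log b) ^ (1/p)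
        = p ^ (1/p) * (b * (-Real.log b) ^ (1/p)) := by ring
    _ ≤ p ^ (1/p) * (a * (-Real.log a) ^ (1/p)) :=
        mul_le_mul_of_nonneg_left key hc.le
    _ = a * p ^ (1/p) * (-Real.log a) ^ (1/p) := by ring
  -- subadditivity-type estimate
  have hkey : ∀ a b : ℝ, 0 < b → b < a → a ≤ Real.exp (-2) →
      f a - f b ≤ f (a - b) := by
    intro a b hb hba hae
    have ha : 0 < a := hb.trans hba
    have hbe : b ≤ Real.exp (-2) := hba.le.trans hae
    have hd : 0 < a - b := by linarith
    have hde : a - b ≤ Real.exp (-2) := by linarith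
    have hla : (0:ℝ) ≤ -Real.log a := by have := hlog a ha hae; linarith
    have hlb : (0:ℝ) ≤ -Real.log b := by have := hlog b hb hbe; linarith
    have hld : (0:ℝ) ≤ -Real.log (a - b) := by have := hlog _ hd hde; linarith
    rw [hf a ha hae, hf b hb hbe, hf _ hd hde]
    have hAB : (-Real.log a) ^ (1/p) ≤ (-Real.log b) ^ (1/p) := by
      apply Real.rpow_le_rpow hla _ hip
      have := Real.log_le_log hb hba.le
      linarith
    have hAD : (-Real.log a) ^ (1/p) ≤ (-Real.log (a - b)) ^ (1/p) := by
      apply Real.rpow_le_rpow hla _ hip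
      have := Real.log_le_log hd (by linarith : a - b ≤ a)
      linarith
    have hAnn : (0:ℝ) ≤ (-Real.log a) ^ (1/p) := Real.rpow_nonneg hla _
    nlinarith [mul_le_mul_of_nonneg_left hAB (mul_pos hb hc).le,
      mul_le_mul_of_nonneg_left hAD (mul_pos hd hc).le]
  -- the main claim for ordered arguments
  have main : ∀ a b : ℝ, 0 ≤ b → b ≤ a → a ≤ Real.exp (-2) →
      |f a - f b| ^ p ≤ N (|a - b| ^ p) := by
    intro a b hb0 hba hae
    rcases eq_or_lt_of_le hba with rfl | hba'
    · simp only [sub_self, abs_zero, Real.zero_rpow hp0', N]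
      rw [if_pos le_rfl]
    · have ha : 0 < a := lt_of_le_of_lt hb0 hba'
      rcases eq_or_lt_of_le hb0 with rfl | hb'
      · have hfb : f 0 = 0 := by simp [f]
        rw [hfb, sub_zero, sub_zero, abs_of_nonneg (hfnn a ha hae),
          abs_of_pos ha, hcomp a ha hae]
      · -- 0 < b < a
        have hd : 0 < a - b := by linarith
        have hde : a - b ≤ Real.exp (-2) := by linarith
        have h1 : |f a - f b| = f a - f b := by
          rw [abs_of_nonneg]
          have := hmono a b hb' hba'.le hae
          linarith
        rw [h1, abs_of_pos hd, ← hcomp _ hd hde]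
        apply Real.rpow_le_rpow _ (hkey a b hb' hba' hae) hp0.le
        have := hmono a b hb' hba'.le hae
        linarith
  intro x hx y hy
  rcases le_total y x with h | h
  · exact main x y hy.1 h hx.2
  · have := main y x hx.1 h hy.2
    rwa [abs_sub_comm (f y) (f x), abs_sub_comm y x] at this
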